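/- arXiv:1406.1237 — 2 statements merged into one kernel-verified Lean document; each statement's English description precedes it below -/
import Mathlib

section
/- Let R be a projective-free ring and let h ∈ R[t] be a monic polynomial of degree n. Then the following are equivalent: (1) every n × n matrix φ over R with characteristic polynomial χ(φ) = h is strongly J^#-clean; (2) the companion matrix C_h of h is strongly J^#-clean; (3) there exists a factorization h = h₀h₁ with h₀ ∈ 𝕁₀ and h₁ ∈ 𝕁₁. -/
open Polynomial

universe u

/-- The Jacobson radical of a ring: the intersection of all maximal (left) ideals. -/
def jacobsonRadical (R : Type*) [Ring R] : Ideal R := Ideal.jacobson (⊥ : Ideal R)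

/-- `J^#(R) = {x ∈ R : x ^ n ∈ J(R) for some n ∈ ℕ}`. -/
def Jsharp (R : Type*) [Ring R] : Set R :=
  {x | ∃ n : ℕ, 0 < n ∧ x ^ n ∈ jacobsonRadical R}

/-- An element `a` is strongly `J^#`-clean if `a = e + u` with `e` idempotent,
`u ∈ J^#(R)` and `e * a = a * e`. -/
def IsStronglyJsharpClean {R : Type*} [Ring R] (a : R) : Prop :=
  ∃ e : R, IsIdempotentElem e ∧ a - e ∈ Jsharp R ∧ e * a = a * e

/-- A commutative ring is projective-free if every finitely generated projective
module is free. -/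
def IsProjectiveFree (R : Type u) [CommRing R] : Prop :=
  ∀ (M : Type u) [AddCommGroup M] [Module R M],
    Module.Finite R M → Module.Projective R M → Module.Free R M

/-- `𝕁_r`: monic polynomials congruent to `(t - r) ^ deg f` modulo `J^#(R)`. -/
def Jpoly {R : Type*} [CommRing R] (r : R) : Set R[X] :=
  {f | f.Monic ∧ ∀ i, (f - (X - C r) ^ f.natDegree).coeff i ∈ Jsharp R}

/-- The companion matrix of a polynomial `h`: subdiagonal entries `1`, last column
`(-h₀, -h₁, …, -h_{n-1})ᵀ`, all other entries `0`. -/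
def companionMatrix {R : Type*} [CommRing R] (n : ℕ) (h : R[X]) :
    Matrix (Fin n) (Fin n) R :=
  Matrix.of fun i j =>
    if (j : ℕ) = n - 1 then -h.coeff i
    else if (i : ℕ) = (j : ℕ) + 1 then 1 else 0

section JLemmas

variable {R : Type*} [CommRing R]

lemma mem_jacobson_of_pow_mem {x : R} {m : ℕ} (hx : x ^ m ∈ jacobsonRadical R) :
    x ∈ jacobsonRadical R := by
  rw [jacobsonRadical, Ideal.jacobson, Submodule.mem_sInf] at *
  intro I hI
  exact hI.2.isPrime.mem_of_pow_mem m (hx I hI)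

lemma jsharp_subset {x : R} (hx : x ∈ Jsharp R) : x ∈ jacobsonRadical R := by
  obtain ⟨m, _, hm⟩ := hx; exact mem_jacobson_of_pow_mem hm

lemma mem_jsharp_of_jac {S : Type*} [Ring S] {x : S} (hx : x ∈ jacobsonRadical S) :
    x ∈ Jsharp S := ⟨1, one_pos, by simpa⟩

lemma isUnit_one_add_jac {x : R} (hx : x ∈ jacobsonRadical R) : IsUnit (1 + x) := by
  apply Ideal.isUnit_of_sub_one_mem_jacobson_bot
  simpa [jacobsonRadical] using hx

end JLemmas

section MatJ

variable {R : Type*} [CommRing R] {n : ℕ}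

/-- matrices with all entries in the Jacobson radical -/
def MJ (R : Type*) [CommRing R] (n : ℕ) : Set (Matrix (Fin n) (Fin n) R) :=
  {A | ∀ i j, A i j ∈ jacobsonRadical R}

lemma MJ.add {A B : Matrix (Fin n) (Fin n) R} (hA : A ∈ MJ R n) (hB : B ∈ MJ R n) :
    A + B ∈ MJ R n := fun i j => Ideal.add_mem _ (hA i j) (hB i j)

lemma MJ.neg {A : Matrix (Fin n) (Fin n) R} (hA : A ∈ MJ R n) : -A ∈ MJ R n :=
  fun i j => by simpa using Submodule.neg_mem _ (hA i j)

lemma MJ.mul_left {A : Matrix (Fin n) (Fin n) R} (B : Matrix (Fin n) (Fin n) R)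
    (hA : A ∈ MJ R n) : B * A ∈ MJ R n := by
  intro i j
  rw [Matrix.mul_apply]
  exact Ideal.sum_mem _ fun k _ => Ideal.mul_mem_left _ _ (hA k j)

lemma MJ.mul_right {A : Matrix (Fin n) (Fin n) R} (B : Matrix (Fin n) (Fin n) R)
    (hA : A ∈ MJ R n) : A * B ∈ MJ R n := by
  intro i j
  rw [Matrix.mul_apply]
  exact Ideal.sum_mem _ fun k _ => Ideal.mul_mem_right _ _ (hA i k)

lemma MJ.map_eq_zero {A : Matrix (Fin n) (Fin n) R} (hA : A ∈ MJ R n) :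
    A.map (Ideal.Quotient.mk (jacobsonRadical R)) = 0 := by
  ext i j
  simpa [Matrix.map_apply, Ideal.Quotient.eq_zero_iff_mem] using hA i j

lemma MJ.isUnit_one_add {A : Matrix (Fin n) (Fin n) R} (hA : A ∈ MJ R n) :
    IsUnit (1 + A) := by
  rw [Matrix.isUnit_iff_isUnit_det]
  have hmem : (1 + A).det - 1 ∈ jacobsonRadical R := by
    rw [← Ideal.Quotient.eq_zero_iff_mem, map_sub,
      RingHom.map_det (Ideal.Quotient.mk (jacobsonRadical R))]
    simp [Matrix.map_add, MJ.map_eq_zero hA]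
  simpa using isUnit_one_add_jac hmem

lemma MJ.mem_jacobson {A : Matrix (Fin n) (Fin n) R} (hA : A ∈ MJ R n) :
    A ∈ jacobsonRadical (Matrix (Fin n) (Fin n) R) := by
  rw [jacobsonRadical, Ideal.jacobson, Submodule.mem_sInf]
  rintro m ⟨-, hm⟩
  by_contra hA'
  have h1 : m ⊔ Ideal.span {A} = ⊤ := by
    refine hm.1.2 _ (lt_of_le_of_ne le_sup_left fun hEq => hA' ?_)
    have : A ∈ m ⊔ Ideal.span {A} :=
      Submodule.mem_sup_right (Ideal.subset_span (Set.mem_singleton _))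
    rwa [← hEq] at this
  have h2 : (1 : Matrix (Fin n) (Fin n) R) ∈ m ⊔ Ideal.span {A} := h1 ▸ trivial
  obtain ⟨y, hy, z, hz, hyz⟩ := Submodule.mem_sup.1 h2
  obtain ⟨c, rfl⟩ := Submodule.mem_span_singleton.1 hz
  rw [smul_eq_mul] at hyz
  have hu : IsUnit y := by
    have : y = 1 + (-(c * A)) := by
      rw [← sub_eq_add_neg]; exact eq_sub_of_add_eq hyz
    rw [this]
    exact MJ.isUnit_one_add (MJ.neg (MJ.mul_left c hA))
  exact hm.ne_top (Ideal.eq_top_of_isUnit_mem m hy hu)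

lemma det_of_rows_eq_one {m : ℕ} (N : Matrix (Fin (m+1)) (Fin (m+1)) R) (q : Fin (m+1))
    (hN : ∀ k l, k ≠ q → N k l = if k = l then 1 else 0) : N.det = N q q := by
  rw [Matrix.det_succ_row N q, Finset.sum_eq_single q]
  · have hminor : N.submatrix q.succAbove q.succAbove = 1 := by
      ext i j
      rw [Matrix.submatrix_apply, hN _ _ (Fin.succAbove_ne q i)]
      by_cases hij : i = j
      · simp [hij, Matrix.one_apply]
      · simp [Matrix.one_apply, hij, (Fin.succAbove_right_injective (p := q)).ne hij]
    rw [hminor, Matrix.det_one, mul_one]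
    have he : (-1 : R) ^ ((q : ℕ) + (q : ℕ)) = 1 := Even.neg_one_pow ⟨q, rfl⟩
    rw [he, one_mul]
  · intro l _ hlq
    obtain ⟨j', hj'⟩ := Fin.exists_succAbove_eq (Ne.symm hlq)
    have hz : (N.submatrix q.succAbove l.succAbove).det = 0 := by
      apply Matrix.det_eq_zero_of_column_eq_zero j'
      intro i
      rw [Matrix.submatrix_apply, hj', hN _ _ (Fin.succAbove_ne q i)]
      simp [(Fin.succAbove_ne q i)]
    rw [hz, mul_zero]
  · simp

lemma MJ.of_mem_jacobson {A : Matrix (Fin n) (Fin n) R}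
    (hA : A ∈ jacobsonRadical (Matrix (Fin n) (Fin n) R)) : A ∈ MJ R n := by
  have key : ∀ Y : Matrix (Fin n) (Fin n) R, IsUnit (1 - Y * A) := by
    intro Y
    by_contra hu
    have hspan : Ideal.span {1 - Y * A} ≠ ⊤ := by
      intro htop
      apply hu
      have h2 : (1 : Matrix (Fin n) (Fin n) R) ∈ Ideal.span {1 - Y * A} := htop ▸ trivial
      obtain ⟨c, hc⟩ := Submodule.mem_span_singleton.1 h2
      rw [smul_eq_mul] at hc
      rw [Matrix.isUnit_iff_isUnit_det]
      refine IsUnit.of_mul_eq_one c.det ?_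
      rw [mul_comm, ← Matrix.det_mul, hc, Matrix.det_one]
    obtain ⟨mI, hmI, hle⟩ := Ideal.exists_le_maximal _ hspan
    have hAm : A ∈ mI := by
      rw [jacobsonRadical, Ideal.jacobson, Submodule.mem_sInf] at hA
      exact hA mI ⟨bot_le, hmI⟩
    have hYA : Y * A ∈ mI := by simpa [smul_eq_mul] using mI.smul_mem Y hAm
    have hM : (1 - Y * A) ∈ mI := hle (Ideal.subset_span (Set.mem_singleton _))
    have hone : (1 : Matrix (Fin n) (Fin n) R) ∈ mI := by
      have := mI.add_mem hM hYA
      simpa using this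
    exact hmI.ne_top ((Ideal.eq_top_iff_one mI).2 hone)
  intro p q
  have hn0 : n ≠ 0 := q.pos.ne'
  obtain ⟨m, rfl⟩ : ∃ m, n = m + 1 := ⟨n - 1, (Nat.succ_pred_eq_of_ne_zero hn0).symm⟩
  rw [jacobsonRadical, Ideal.mem_jacobson_bot]
  intro y
  have hu := key ((-y) • Matrix.single q p (1 : R))
  set N := 1 - ((-y) • Matrix.single q p (1 : R)) * A with hNdef
  have hsmul : ((-y) • Matrix.single q p (1 : R)) * A
      = (-y) • (Matrix.single q p (1 : R) * A) := by
    rw [Matrix.smul_mul]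
  have hrow : ∀ k l, k ≠ q → N k l = if k = l then 1 else 0 := by
    intro k l hk
    rw [hNdef, hsmul, Matrix.sub_apply, Matrix.smul_apply,
      Matrix.single_mul_apply_of_ne (c := (1 : R)) q p k l hk A, Matrix.one_apply]
    simp
  have hdet : N.det = N q q := det_of_rows_eq_one N q hrow
  have hqq : N q q = 1 + y * A p q := by
    rw [hNdef, hsmul, Matrix.sub_apply, Matrix.smul_apply,
      Matrix.single_mul_apply_same (c := (1 : R)) q p q A, Matrix.one_apply_eq]
    simp [smul_eq_mul]
  rw [Matrix.isUnit_iff_isUnit_det, hdet, hqq] at hu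
  have : A p q * y + 1 = 1 + y * A p q := by ring
  rwa [this]

end MatJ

section Companion

variable {R : Type*} [CommRing R]

lemma divX_monic {h : R[X]} (hm : h.Monic) {m : ℕ} (hdeg : h.natDegree = m + 1) :
    (divX h).Monic ∧ (divX h).natDegree = m := by
  have hnd : (divX h).natDegree = m := by
    rw [Polynomial.natDegree_divX_eq_natDegree_tsub_one, hdeg]
    omega
  refine ⟨?_, hnd⟩
  unfold Polynomial.Monic Polynomial.leadingCoeff
  rw [hnd, Polynomial.coeff_divX, ← hdeg]
  exact hm.coeff_natDegree

lemma charpoly_companion : ∀ {n : ℕ} (h : R[X]), h.Monic → h.natDegree = n →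
    (companionMatrix n h).charpoly = h := by
  intro n
  induction n with
  | zero =>
    intro h hm hdeg
    rw [show (companionMatrix 0 h).charpoly = (Matrix.charmatrix (companionMatrix 0 h)).det
      from rfl, Matrix.det_isEmpty]
    exact ((hm.natDegree_eq_zero).1 hdeg).symm
  | succ m IH =>
    intro h hm hdeg
    rcases Nat.eq_zero_or_pos m with hm0 | hmpos
    · subst hm0
      rw [show (companionMatrix 1 h).charpoly = (Matrix.charmatrix (companionMatrix 1 h)).det
        from rfl, Matrix.det_fin_one, Matrix.charmatrix_apply_eq]
      have hA00 : companionMatrix 1 h 0 0 = -h.coeff 0 := by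
        simp [companionMatrix]
      rw [hA00]
      have := Polynomial.eq_X_add_C_of_natDegree_le_one (p := h) (by omega)
      rw [show h.coeff 1 = 1 from by simpa [hdeg] using hm.coeff_natDegree] at this
      rw [map_neg, sub_neg_eq_add]
      conv_rhs => rw [this]
      rw [map_one, one_mul]
    · -- m ≥ 1
      set A := companionMatrix (m + 1) h with hAdef
      have hlast0 : (Fin.last m) ≠ (0 : Fin (m + 1)) := by
        simp only [ne_eq, Fin.ext_iff, Fin.val_last, Fin.val_zero]
        omega
      -- entries of row 0 of the charmatrix
      have hA00 : Matrix.charmatrix A 0 0 = X := by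
        rw [Matrix.charmatrix_apply_eq]
        have : A 0 0 = 0 := by
          simp only [hAdef, companionMatrix, Matrix.of_apply]
          rw [if_neg (by simp only [Fin.val_zero, Nat.add_sub_cancel]; omega),
            if_neg (by simp only [Fin.val_zero]; omega)]
        rw [this, map_zero, sub_zero]
      have hA0last : Matrix.charmatrix A 0 (Fin.last m) = C (h.coeff 0) := by
        rw [Matrix.charmatrix_apply_ne _ _ _ (Ne.symm hlast0)]
        have : A 0 (Fin.last m) = -h.coeff 0 := by
          simp only [hAdef, companionMatrix, Matrix.of_apply]
          rw [if_pos (by simp [Fin.val_last])]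
          simp
        rw [this, map_neg, neg_neg]
      have hA0j : ∀ j : Fin (m + 1), j ≠ 0 → j ≠ Fin.last m →
          Matrix.charmatrix A 0 j = 0 := by
        intro j hj0 hjl
        rw [Matrix.charmatrix_apply_ne _ _ _ (Ne.symm hj0)]
        have hjl' : (j : ℕ) ≠ m := fun hc => hjl (by ext; simp [hc, Fin.val_last])
        have : A 0 j = 0 := by
          simp only [hAdef, companionMatrix, Matrix.of_apply, Nat.add_sub_cancel]
          rw [if_neg hjl', if_neg (by simp only [Fin.val_zero]; omega)]
        rw [this, map_zero, neg_zero]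
      -- the expansion
      rw [show A.charpoly = (Matrix.charmatrix A).det from rfl,
        Matrix.det_succ_row_zero]
      have hsub : ∀ x ∈ (Finset.univ : Finset (Fin (m + 1))), x ∉ ({0, Fin.last m} :
          Finset (Fin (m + 1))) →
          (-1) ^ (x : ℕ) * Matrix.charmatrix A 0 x *
            ((Matrix.charmatrix A).submatrix Fin.succ x.succAbove).det = 0 := by
        intro x _ hx
        simp only [Finset.mem_insert, Finset.mem_singleton] at hx
        push_neg at hx
        rw [hA0j x hx.1 hx.2, mul_zero, zero_mul]
      rw [← Finset.sum_subset (Finset.subset_univ ({0, Fin.last m} :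
          Finset (Fin (m + 1)))) hsub,
        Finset.sum_pair (Ne.symm hlast0)]
      -- minor at column 0
      have hentry : ∀ i j : Fin m, A i.succ j.succ = companionMatrix m (divX h) i j := by
        intro i j
        have hilt := i.is_lt
        have hjlt := j.is_lt
        simp only [hAdef, companionMatrix, Matrix.of_apply, Fin.val_succ, Nat.add_sub_cancel,
          Polynomial.coeff_divX]
        by_cases h1 : (j : ℕ) + 1 = m
        · rw [if_pos h1, if_pos (show (j : ℕ) = m - 1 by omega)]
        · rw [if_neg h1, if_neg (show ¬((j : ℕ) = m - 1) by omega)]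
          by_cases h2 : (i : ℕ) = (j : ℕ) + 1
          · rw [if_pos (show (i : ℕ) + 1 = (j : ℕ) + 1 + 1 by omega), if_pos h2]
          · rw [if_neg (show ¬((i : ℕ) + 1 = (j : ℕ) + 1 + 1) by omega), if_neg h2]
      have hminor0 : (Matrix.charmatrix A).submatrix Fin.succ ((0 : Fin (m+1)).succAbove)
          = Matrix.charmatrix (companionMatrix m (divX h)) := by
        rw [Fin.succAbove_zero]
        ext i j
        rw [Matrix.submatrix_apply]
        by_cases hij : i = j
        · subst hij
          rw [Matrix.charmatrix_apply_eq, Matrix.charmatrix_apply_eq, hentry]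
        · rw [Matrix.charmatrix_apply_ne _ _ _ (fun hc => hij (Fin.succ_injective _ hc)),
            Matrix.charmatrix_apply_ne _ _ _ hij, hentry]
      -- minor at last column is upper triangular with -1 diagonal
      have hminorlast : ((Matrix.charmatrix A).submatrix Fin.succ
          ((Fin.last m).succAbove)).det = (-1 : R[X]) ^ m := by
        have hsa : ((Fin.last m).succAbove) = Fin.castSucc := Fin.succAbove_last
        rw [hsa]
        have htri : ((Matrix.charmatrix A).submatrix Fin.succ Fin.castSucc).BlockTriangular
            (id : Fin m → Fin m) := by
          intro i j hij
          simp only [id] at hij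
          rw [Matrix.submatrix_apply,
            Matrix.charmatrix_apply_ne _ _ _ (by
              simp only [ne_eq, Fin.ext_iff, Fin.val_succ, Fin.coe_castSucc]
              omega)]
          have hjm := j.is_lt
          have hij' : (j : ℕ) < (i : ℕ) := hij
          have : A i.succ j.castSucc = 0 := by
            simp only [hAdef, companionMatrix, Matrix.of_apply, Fin.val_succ,
              Fin.coe_castSucc, Nat.add_sub_cancel]
            rw [if_neg (by omega), if_neg (by omega)]
          rw [this, map_zero, neg_zero]
        rw [Matrix.det_of_upperTriangular htri]
        have hdiag : ∀ i : Fin m, ((Matrix.charmatrix A).submatrix Fin.succ Fin.castSucc) i i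
            = -1 := by
          intro i
          rw [Matrix.submatrix_apply,
            Matrix.charmatrix_apply_ne _ _ _ (by
              simp only [ne_eq, Fin.ext_iff, Fin.val_succ, Fin.coe_castSucc]
              omega)]
          have him := i.is_lt
          have : A i.succ i.castSucc = 1 := by
            simp only [hAdef, companionMatrix, Matrix.of_apply, Fin.val_succ,
              Fin.coe_castSucc, Nat.add_sub_cancel]
            rw [if_neg (by omega)]
            simp
          rw [this, map_one]
        calc ∏ i : Fin m, ((Matrix.charmatrix A).submatrix Fin.succ Fin.castSucc) i i
            = ∏ _i : Fin m, (-1 : R[X]) := Finset.prod_congr rfl (fun i _ => hdiag i)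
          _ = (-1 : R[X]) ^ m := by
              rw [Finset.prod_const, Finset.card_univ, Fintype.card_fin]
      obtain ⟨hdm, hdd⟩ := divX_monic hm hdeg
      have hIH := IH (divX h) hdm hdd
      rw [hminor0, hA00, hA0last, hminorlast,
        show ((Matrix.charmatrix (companionMatrix m (divX h))).det)
          = (companionMatrix m (divX h)).charpoly from rfl, hIH]
      simp only [Fin.val_zero, pow_zero, one_mul, Fin.val_last]
      have : (-1 : R[X]) ^ m * C (h.coeff 0) * (-1 : R[X]) ^ m = C (h.coeff 0) := by
        rw [mul_comm ((-1 : R[X]) ^ m), mul_assoc, ← pow_add]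
        rw [Even.neg_one_pow ⟨m, rfl⟩, mul_one]
      rw [this]
      exact Polynomial.X_mul_divX_add h

end Companion

section PowIdem

lemma pow_sub_idem {S : Type*} [Ring S] {φ E : S} (hE : E * E = E) (hc : E * φ = φ * E) :
    ∀ N : ℕ, (φ - E) ^ N = φ ^ N * (1 - E) + (φ - 1) ^ N * E := by
  intro N
  induction N with
  | zero => simp
  | succ N IH =>
    have hcE : (1 - E) * φ = φ * (1 - E) := by
      rw [sub_mul, mul_sub, one_mul, mul_one, hc]
    have h0 : (1 - E) * E = 0 := by rw [sub_mul, one_mul, hE, sub_self]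
    rw [pow_succ, IH, add_mul]
    have t1 : φ ^ N * (1 - E) * (φ - E) = φ ^ (N + 1) * (1 - E) := by
      rw [mul_sub, mul_assoc (φ ^ N), hcE, mul_assoc (φ ^ N) (1 - E) E, h0, mul_zero,
        sub_zero, ← mul_assoc, ← pow_succ]
    have t2 : (φ - 1) ^ N * E * (φ - E) = (φ - 1) ^ (N + 1) * E := by
      have hEφE : E * (φ - E) = (φ - 1) * E := by
        rw [mul_sub, sub_mul, hc, hE, one_mul]
      rw [mul_assoc, hEφE, ← mul_assoc, ← pow_succ]
    rw [t1, t2]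

end PowIdem

section ThreeToOne

variable {R : Type*} [CommRing R] {n : ℕ}

lemma aeval_entries_mem {p : R[X]} (hp : ∀ i, p.coeff i ∈ jacobsonRadical R)
    (φ : Matrix (Fin n) (Fin n) R) : (aeval φ p) ∈ MJ R n := by
  intro i j
  rw [Polynomial.aeval_eq_sum_range (x := φ) (p := p), Matrix.sum_apply]
  apply Ideal.sum_mem
  intro k _
  rw [Matrix.smul_apply, smul_eq_mul]
  exact Ideal.mul_mem_right _ _ (hp k)

lemma three_to_one {h h₀ h₁ : R[X]} (hcharh : h = h₀ * h₁)
    (hh0 : h₀ ∈ Jpoly (0 : R)) (hh1 : h₁ ∈ Jpoly (1 : R))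
    (φ : Matrix (Fin n) (Fin n) R) (hφ : φ.charpoly = h) : IsStronglyJsharpClean φ := by
  classical
  set d0 := h₀.natDegree with hd0def
  set d1 := h₁.natDegree with hd1def
  have hc0 : ∀ i, (h₀ - X ^ d0).coeff i ∈ jacobsonRadical R := by
    intro i
    have := jsharp_subset (hh0.2 i)
    simpa using this
  have hc1 : ∀ i, (h₁ - (X - 1) ^ d1).coeff i ∈ jacobsonRadical R := by
    intro i
    have := jsharp_subset (hh1.2 i)
    simpa using this
  have hcop : IsCoprime ((X : R[X]) ^ d0) ((X - 1) ^ d1) :=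
    IsCoprime.pow (⟨1, -1, by ring⟩ : IsCoprime (X : R[X]) (X - 1))
  obtain ⟨a, b, hab⟩ := hcop
  have hj : ∀ i, (a * h₀ + b * h₁ - 1).coeff i ∈ jacobsonRadical R := by
    intro i
    have hrw : a * h₀ + b * h₁ - 1
        = a * (h₀ - X ^ d0) + b * (h₁ - (X - 1) ^ d1) := by
      linear_combination hab
    rw [hrw, Polynomial.coeff_add, Polynomial.coeff_mul, Polynomial.coeff_mul]
    refine Ideal.add_mem _ (Ideal.sum_mem _ ?_) (Ideal.sum_mem _ ?_) <;>
      · rintro ⟨x, y⟩ _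
        exact Ideal.mul_mem_left _ _ (by first | exact hc0 y | exact hc1 y)
  set U := aeval φ (a * h₀ + b * h₁) with hUdef
  have hUunit : IsUnit U := by
    have : U = 1 + aeval φ (a * h₀ + b * h₁ - 1) := by
      rw [map_sub, map_one, ← hUdef]
      abel
    rw [this]
    exact MJ.isUnit_one_add (aeval_entries_mem hj φ)
  set V := (↑hUunit.unit⁻¹ : Matrix (Fin n) (Fin n) R) with hVdef
  have hVU : V * U = 1 := hUunit.val_inv_mul
  have hUV : U * V = 1 := hUunit.mul_val_inv
  have hcomm : ∀ p q : R[X], aeval φ p * aeval φ q = aeval φ q * aeval φ p := fun p q => by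
    rw [← map_mul, ← map_mul, mul_comm]
  have hAφ : ∀ p : R[X], aeval φ p * φ = φ * aeval φ p := fun p => by
    simpa using hcomm p X
  have hhφ : aeval φ h = 0 := by rw [← hφ]; exact Matrix.aeval_self_charpoly φ
  have hVcomm : ∀ W : Matrix (Fin n) (Fin n) R, U * W = W * U → V * W = W * V := by
    intro W hW
    calc V * W = V * W * (U * V) := by rw [hUV, mul_one]
      _ = V * (W * U) * V := by simp only [mul_assoc]
      _ = V * (U * W) * V := by rw [hW]
      _ = (V * U) * (W * V) := by simp only [mul_assoc]
      _ = W * V := by rw [hVU, one_mul]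
  set A0 := aeval φ (a * h₀) with hA0def
  set B1 := aeval φ (b * h₁) with hB1def
  have hsum : A0 + B1 = U := by rw [hUdef, map_add]
  have hprod : A0 * B1 = 0 := by
    rw [← map_mul, show a * h₀ * (b * h₁) = a * b * h from by rw [hcharh]; ring,
      map_mul, hhφ, mul_zero]
  have hUA0 : U * A0 = A0 * U := by rw [hUdef]; exact hcomm _ _
  have hVA0 : V * A0 = A0 * V := hVcomm A0 hUA0
  have hUφ : U * φ = φ * U := by rw [hUdef]; exact hAφ _
  have hVφ : V * φ = φ * V := hVcomm φ hUφ
  obtain ⟨E, hEdef⟩ : ∃ E, E = V * A0 := ⟨_, rfl⟩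
  have hA0A0 : A0 * A0 = A0 * U := by
    have hx : A0 * U = A0 * A0 + A0 * B1 := by rw [← hsum, mul_add]
    rw [hx, hprod, add_zero]
  have hidem : E * E = E := by
    calc E * E = V * (A0 * V) * A0 := by rw [hEdef]; simp only [mul_assoc]
      _ = V * (V * A0) * A0 := by rw [← hVA0]
      _ = V * V * (A0 * A0) := by simp only [mul_assoc]
      _ = V * V * (A0 * U) := by rw [hA0A0]
      _ = V * (V * A0) * U := by simp only [mul_assoc]
      _ = V * (A0 * V) * U := by rw [hVA0]
      _ = V * A0 * (V * U) := by simp only [mul_assoc]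
      _ = E := by rw [hVU, mul_one, hEdef]
  have hA0φ : A0 * φ = φ * A0 := by rw [hA0def]; exact hAφ _
  have hEφ : E * φ = φ * E := by
    calc E * φ = V * (A0 * φ) := by rw [hEdef]; simp only [mul_assoc]
      _ = V * (φ * A0) := by rw [hA0φ]
      _ = (V * φ) * A0 := by simp only [mul_assoc]
      _ = φ * (V * A0) := by rw [hVφ]; simp only [mul_assoc]
      _ = φ * E := by rw [hEdef]
  have h1E : 1 - E = V * B1 := by
    rw [hEdef, ← hVU, ← hsum, mul_add, add_sub_cancel_left]
  have hh0E : aeval φ h₀ * (1 - E) = 0 := by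
    have hx : aeval φ h₀ * B1 = 0 := by
      rw [hB1def, ← map_mul, show h₀ * (b * h₁) = b * h from by rw [hcharh]; ring,
        map_mul, hhφ, mul_zero]
    have hcV : V * aeval φ h₀ = aeval φ h₀ * V := hVcomm _ (by rw [hUdef]; exact hcomm _ _)
    rw [h1E, ← mul_assoc, ← hcV, mul_assoc, hx, mul_zero]
  have hh1E : aeval φ h₁ * E = 0 := by
    have hx : aeval φ h₁ * A0 = 0 := by
      rw [hA0def, ← map_mul, show h₁ * (a * h₀) = a * h from by rw [hcharh]; ring,
        map_mul, hhφ, mul_zero]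
    have hcV : V * aeval φ h₁ = aeval φ h₁ * V := hVcomm _ (by rw [hUdef]; exact hcomm _ _)
    rw [hEdef, ← mul_assoc, ← hcV, mul_assoc, hx, mul_zero]
  have hd0mem : φ ^ d0 * (1 - E) ∈ MJ R n := by
    have hsplit : φ ^ d0 = aeval φ h₀ + aeval φ (X ^ d0 - h₀) := by
      rw [← map_add, show h₀ + (X ^ d0 - h₀) = X ^ d0 from by ring, map_pow, Polynomial.aeval_X]
    rw [hsplit, add_mul, hh0E, zero_add]
    refine MJ.mul_right _ (aeval_entries_mem ?_ φ)
    intro i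
    have := hc0 i
    rw [show (X : R[X]) ^ d0 - h₀ = -(h₀ - X ^ d0) from by ring, Polynomial.coeff_neg]
    exact Submodule.neg_mem _ this
  have hd1mem : (φ - 1) ^ d1 * E ∈ MJ R n := by
    have hsplit : (φ - 1) ^ d1 = aeval φ h₁ + aeval φ ((X - 1) ^ d1 - h₁) := by
      rw [← map_add, show h₁ + ((X - 1) ^ d1 - h₁) = (X - 1) ^ d1 from by ring,
        map_pow, map_sub, Polynomial.aeval_X, map_one]
    rw [hsplit, add_mul, hh1E, zero_add]
    refine MJ.mul_right _ (aeval_entries_mem ?_ φ)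
    intro i
    have := hc1 i
    rw [show ((X : R[X]) - 1) ^ d1 - h₁ = -(h₁ - (X - 1) ^ d1) from by ring,
      Polynomial.coeff_neg]
    exact Submodule.neg_mem _ this
  refine ⟨E, hidem, ⟨max d0 d1 + 1, Nat.succ_pos _, ?_⟩, hEφ⟩
  rw [pow_sub_idem hidem hEφ (max d0 d1 + 1)]
  apply MJ.mem_jacobson
  apply MJ.add
  · have hx : φ ^ (max d0 d1 + 1) * (1 - E)
        = φ ^ (max d0 d1 + 1 - d0) * (φ ^ d0 * (1 - E)) := by
      rw [← mul_assoc, ← pow_add]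
      congr 2
      omega
    rw [hx]
    exact MJ.mul_left _ hd0mem
  · have hx : (φ - 1) ^ (max d0 d1 + 1) * E
        = (φ - 1) ^ (max d0 d1 + 1 - d1) * ((φ - 1) ^ d1 * E) := by
      rw [← mul_assoc, ← pow_add]
      congr 2
      omega
    rw [hx]
    exact MJ.mul_left _ hd1mem

end ThreeToOne

section TwoToThree

variable {R : Type u} [CommRing R]

lemma charpoly_add_one {m : Type*} [Fintype m] [DecidableEq m] (B : Matrix m m R) :
    (B + 1).charpoly = aeval (X - 1 : R[X]) B.charpoly := by
  have hM : (B + 1).charmatrix = (aeval (X - 1 : R[X])).mapMatrix B.charmatrix := by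
    apply Matrix.ext
    intro i j
    rw [AlgHom.mapMatrix_apply, Matrix.map_apply]
    by_cases hij : i = j
    · subst hij
      rw [Matrix.charmatrix_apply_eq, Matrix.charmatrix_apply_eq, map_sub, Polynomial.aeval_X,
        Polynomial.aeval_C, Matrix.add_apply, Matrix.one_apply_eq, Polynomial.algebraMap_eq,
        map_add, Polynomial.C_1]
      ring
    · rw [Matrix.charmatrix_apply_ne _ _ _ hij, Matrix.charmatrix_apply_ne _ _ _ hij, map_neg,
        Polynomial.aeval_C, Matrix.add_apply, Matrix.one_apply_ne hij, add_zero,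
        Polynomial.algebraMap_eq]
  show ((B + 1).charmatrix).det = aeval (X - 1 : R[X]) ((B.charmatrix).det)
  rw [hM, ← AlgHom.map_det]

lemma functional_mem {n : ℕ} (ℓ : (Fin n → R) →ₗ[R] R) {v : Fin n → R}
    (hv : ∀ l, v l ∈ jacobsonRadical R) : ℓ v ∈ jacobsonRadical R := by
  classical
  have hvsum : v = ∑ l : Fin n, v l • (Pi.single l (1 : R) : Fin n → R) := by
    ext k
    rw [Finset.sum_apply]
    simp [Pi.single_apply]
  rw [hvsum, map_sum]
  apply Ideal.sum_mem
  intro l _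
  rw [map_smul, smul_eq_mul]
  exact Ideal.mul_mem_right _ _ (hv l)

set_option maxHeartbeats 1000000 in
set_option synthInstance.maxHeartbeats 400000 in
lemma two_to_three [Nontrivial R] (hR : IsProjectiveFree R) {n : ℕ}
    {A : Matrix (Fin n) (Fin n) R} (hA : IsStronglyJsharpClean A) :
    ∃ h₀ h₁ : R[X], A.charpoly = h₀ * h₁ ∧ h₀ ∈ Jpoly (0 : R) ∧ h₁ ∈ Jpoly (1 : R) := by
  classical
  obtain ⟨Em, hEm, ⟨k, hk, hWk⟩, hcom⟩ := hA
  have hWJ : (A - Em) ^ k ∈ MJ R n := MJ.of_mem_jacobson hWk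
  set e : (Fin n → R) →ₗ[R] (Fin n → R) := Matrix.toLin' Em with hedef
  set aL : (Fin n → R) →ₗ[R] (Fin n → R) := Matrix.toLin' A with haLdef
  set wL : (Fin n → R) →ₗ[R] (Fin n → R) := Matrix.toLin' (A - Em) with hwLdef
  have hwLe : wL = aL - e := by rw [hwLdef, map_sub]
  have he2 : e ∘ₗ e = e := by rw [hedef, ← Matrix.toLin'_mul, hEm.eq]
  have he2' : ∀ x, e (e x) = e x := fun x => congrArg (fun f => f x) he2
  have hcomL : e ∘ₗ aL = aL ∘ₗ e := by
    rw [hedef, haLdef, ← Matrix.toLin'_mul, ← Matrix.toLin'_mul, hcom]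
  have hcomL' : ∀ x, e (aL x) = aL (e x) := fun x => congrArg (fun f => f x) hcomL
  set p := LinearMap.range e with hpdef
  set q := LinearMap.ker e with hqdef
  have heid : ∀ x ∈ p, e x = x := by
    rintro x ⟨y, rfl⟩
    exact he2' y
  have hproj : ∀ x : p, e.rangeRestrict x = x := by
    intro x
    apply Subtype.ext
    simpa using heid x x.2
  have hcompl : IsCompl p q := by
    have := LinearMap.isCompl_of_proj hproj
    rwa [LinearMap.ker_rangeRestrict] at this
  have hqa : ∀ x ∈ q, aL x ∈ q := by
    intro x hx
    rw [hqdef, LinearMap.mem_ker] at hx ⊢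
    rw [hcomL' x, hx, map_zero]
  have hpa : ∀ x ∈ p, aL x ∈ p := by
    rintro x ⟨y, rfl⟩
    exact ⟨aL y, hcomL' y⟩
  have hqw : ∀ x ∈ q, wL x ∈ q := by
    intro x hx
    rw [hwLe]
    simp only [LinearMap.sub_apply]
    exact Submodule.sub_mem _ (hqa x hx) (by
      rw [hqdef, LinearMap.mem_ker] at hx
      rw [hx]
      exact Submodule.zero_mem _)
  have hpw : ∀ x ∈ p, wL x ∈ p := by
    intro x hx
    rw [hwLe]
    simp only [LinearMap.sub_apply]
    exact Submodule.sub_mem _ (hpa x hx) (by rw [heid x hx]; exact hx)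
  -- module instances
  haveI hfinp : Module.Finite R p :=
    Module.Finite.of_surjective e.rangeRestrict (LinearMap.surjective_rangeRestrict e)
  haveI hprojp : Module.Projective R p :=
    Module.Projective.of_split p.subtype e.rangeRestrict
      (by apply LinearMap.ext; intro x; exact hproj x)
  have hqmem : ∀ x : Fin n → R, x - e x ∈ q := by
    intro x
    rw [hqdef, LinearMap.mem_ker, map_sub, he2' x, sub_self]
  set sq : (Fin n → R) →ₗ[R] q := (LinearMap.id - e).codRestrict q
    (by intro x; simpa using hqmem x) with hsqdef
  have hsq : ∀ x : q, sq x = x := by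
    intro x
    apply Subtype.ext
    have hx : e (x : Fin n → R) = 0 := x.2
    simp [hsqdef, LinearMap.codRestrict_apply, hx]
  haveI hfinq : Module.Finite R q :=
    Module.Finite.of_surjective sq (fun y => ⟨y, hsq y⟩)
  haveI hprojq : Module.Projective R q :=
    Module.Projective.of_split q.subtype sq
      (by apply LinearMap.ext; intro x; simpa using hsq x)
  haveI hfreep : Module.Free R p := hR p hfinp hprojp
  haveI hfreeq : Module.Free R q := hR q hfinq hprojq
  -- restrictions and the conjugation
  set g0 : q →ₗ[R] q := aL.restrict hqa with hg0def
  set g1 : p →ₗ[R] p := aL.restrict hpa with hg1def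
  set ε := Submodule.prodEquivOfIsCompl q p hcompl.symm with hεdef
  have hconj : aL = ε.conj (g0.prodMap g1) := by
    apply LinearMap.ext
    intro v
    rw [LinearEquiv.conj_apply_apply]
    symm
    set x := ε.symm v with hx
    have hv : (x.1 : Fin n → R) + (x.2 : Fin n → R) = v := by
      have := ε.apply_symm_apply v
      rwa [hεdef, Submodule.coe_prodEquivOfIsCompl'] at this
    calc ε ((g0.prodMap g1) x)
        = ((g0 x.1 : q) : Fin n → R) + ((g1 x.2 : p) : Fin n → R) := by
          rw [hεdef, Submodule.coe_prodEquivOfIsCompl']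
          rfl
      _ = aL x.1 + aL x.2 := by
          rw [hg0def, hg1def, LinearMap.restrict_coe_apply, LinearMap.restrict_coe_apply]
      _ = aL v := by rw [← map_add, hv]
  -- characteristic polynomial identities
  have hch1 : A.charpoly = aL.charpoly := by
    rw [← LinearMap.charpoly_toMatrix aL (Pi.basisFun R (Fin n)),
      LinearMap.toMatrix_eq_toMatrix', haLdef, LinearMap.toMatrix'_toLin']
  have hch2 : aL.charpoly = g0.charpoly * g1.charpoly := by
    rw [hconj, LinearEquiv.charpoly_conj, LinearMap.charpoly_prodMap]
  -- bases
  set b0 := Module.Free.chooseBasis R q with hb0def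
  set b1 := Module.Free.chooseBasis R p with hb1def
  set M0 := LinearMap.toMatrix b0 b0 g0 with hM0def
  set M1 := LinearMap.toMatrix b1 b1 g1 with hM1def
  have hcoordJ : ∀ x : q, (∀ l, (x : Fin n → R) l ∈ jacobsonRadical R) →
      ∀ i, b0.repr x i ∈ jacobsonRadical R := by
    intro x hx i
    have hrepr : b0.repr x i
        = (b0.coord i ∘ₗ Submodule.projectionOnto q p hcompl.symm) (x : Fin n → R) := by
      rw [LinearMap.comp_apply, Submodule.projectionOnto_apply_left hcompl.symm x,
        Module.Basis.coord_apply]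
    rw [hrepr]
    exact functional_mem _ hx
  have hcoordJ1 : ∀ x : p, (∀ l, (x : Fin n → R) l ∈ jacobsonRadical R) →
      ∀ i, b1.repr x i ∈ jacobsonRadical R := by
    intro x hx i
    have hrepr : b1.repr x i
        = (b1.coord i ∘ₗ Submodule.projectionOnto p q hcompl) (x : Fin n → R) := by
      rw [LinearMap.comp_apply, Submodule.projectionOnto_apply_left hcompl x,
        Module.Basis.coord_apply]
    rw [hrepr]
    exact functional_mem _ hx
  have htlpow : ∀ (B : Matrix (Fin n) (Fin n) R) (j : ℕ),
      Matrix.toLin' (B ^ j) = (Matrix.toLin' B) ^ j := by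
    intro B j
    induction j with
    | zero => simp only [pow_zero, Matrix.toLin'_one, Module.End.one_eq_id]
    | succ j IH => rw [pow_succ, pow_succ, Matrix.toLin'_mul, IH, Module.End.mul_eq_comp]
  have hwLk : ∀ (v : Fin n → R) (l : Fin n), ((wL ^ k) v) l ∈ jacobsonRadical R := by
    intro v l
    rw [hwLdef, ← htlpow, Matrix.toLin'_apply]
    show ((A - Em) ^ k).mulVec v l ∈ jacobsonRadical R
    rw [Matrix.mulVec, dotProduct]
    exact Ideal.sum_mem _ fun x _ => Ideal.mul_mem_right _ _ (hWJ l x)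
  have hg0wL : g0 = wL.restrict hqw := by
    apply LinearMap.ext
    intro x
    apply Subtype.ext
    rw [hg0def, LinearMap.restrict_coe_apply, LinearMap.restrict_coe_apply, hwLe]
    have hx : e (x : Fin n → R) = 0 := x.2
    simp only [LinearMap.sub_apply, hx, sub_zero]
  have hg1wL : g1 - LinearMap.id = wL.restrict hpw := by
    apply LinearMap.ext
    intro x
    apply Subtype.ext
    have hx : e (x : Fin n → R) = (x : Fin n → R) := heid _ x.2
    rw [LinearMap.sub_apply, LinearMap.id_apply, Submodule.coe_sub, hg1def,
      LinearMap.restrict_coe_apply, LinearMap.restrict_coe_apply, hwLe,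
      LinearMap.sub_apply, hx]
  have hM0AE : M0 = LinearMap.toMatrixAlgEquiv b0 g0 := rfl
  have hM1AE : M1 - 1 = LinearMap.toMatrixAlgEquiv b1 (g1 - LinearMap.id) := by
    have hms : LinearMap.toMatrixAlgEquiv b1 (g1 - LinearMap.id)
        = LinearMap.toMatrix b1 b1 g1 - LinearMap.toMatrix b1 b1 LinearMap.id := by
      show LinearMap.toMatrix b1 b1 (g1 - LinearMap.id) = _
      exact map_sub (LinearMap.toMatrix b1 b1) _ _
    rw [hms, LinearMap.toMatrix_id, hM1def]
  have hM0k : ∀ i j, (M0 ^ k) i j ∈ jacobsonRadical R := by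
    intro i j
    have h1 : M0 ^ k = LinearMap.toMatrix b0 b0 (g0 ^ k) := by
      rw [hM0AE, ← map_pow]
      rfl
    rw [h1, LinearMap.toMatrix_apply, hg0wL, Module.End.pow_restrict]
    apply hcoordJ
    intro l
    rw [LinearMap.restrict_coe_apply]
    exact hwLk _ l
  have hM1k : ∀ i j, ((M1 - 1) ^ k) i j ∈ jacobsonRadical R := by
    intro i j
    have h1 : (M1 - 1) ^ k = LinearMap.toMatrix b1 b1 ((g1 - LinearMap.id) ^ k) := by
      rw [hM1AE, ← map_pow]
      rfl
    rw [h1, LinearMap.toMatrix_apply, hg1wL, Module.End.pow_restrict]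
    apply hcoordJ1
    intro l
    rw [LinearMap.restrict_coe_apply]
    exact hwLk _ l
  -- pass to the quotient
  set π := Ideal.Quotient.mk (jacobsonRadical R) with hπdef
  have hmapzero : ∀ {B : Matrix (Module.Free.ChooseBasisIndex R q)
      (Module.Free.ChooseBasisIndex R q) R}, (∀ i j, B i j ∈ jacobsonRadical R) →
      B.map π = 0 := by
    intro B hB
    ext i j
    simpa [Matrix.map_apply, hπdef, Ideal.Quotient.eq_zero_iff_mem] using hB i j
  have hmapzero1 : ∀ {B : Matrix (Module.Free.ChooseBasisIndex R p)
      (Module.Free.ChooseBasisIndex R p) R}, (∀ i j, B i j ∈ jacobsonRadical R) →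
      B.map π = 0 := by
    intro B hB
    ext i j
    simpa [Matrix.map_apply, hπdef, Ideal.Quotient.eq_zero_iff_mem] using hB i j
  have hM0nil : IsNilpotent (M0.map π) := by
    refine ⟨k, ?_⟩
    have hmp : (M0.map π) ^ k = (M0 ^ k).map π := by
      rw [← RingHom.mapMatrix_apply, ← RingHom.mapMatrix_apply, ← map_pow]
    rw [hmp]
    exact hmapzero hM0k
  have hM1nil : IsNilpotent ((M1 - 1).map π) := by
    refine ⟨k, ?_⟩
    have hmp : ((M1 - 1).map π) ^ k = ((M1 - 1) ^ k).map π := by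
      rw [← RingHom.mapMatrix_apply, ← RingHom.mapMatrix_apply, ← map_pow]
    rw [hmp]
    exact hmapzero1 hM1k
  have hcard0 : g0.charpoly.natDegree = Fintype.card (Module.Free.ChooseBasisIndex R q) := by
    rw [← LinearMap.charpoly_toMatrix g0 b0]
    exact Matrix.charpoly_natDegree_eq_dim _
  have hcard1 : g1.charpoly.natDegree = Fintype.card (Module.Free.ChooseBasisIndex R p) := by
    rw [← LinearMap.charpoly_toMatrix g1 b1]
    exact Matrix.charpoly_natDegree_eq_dim _
  refine ⟨g0.charpoly, g1.charpoly, by rw [hch1, hch2], ⟨LinearMap.charpoly_monic g0, ?_⟩,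
    ⟨LinearMap.charpoly_monic g1, ?_⟩⟩
  · intro i
    rw [Polynomial.C_0, sub_zero]
    have hnil0 := Matrix.isNilpotent_charpoly_sub_pow_of_isNilpotent hM0nil
    have hmap : Polynomial.map π (g0.charpoly - X ^ g0.charpoly.natDegree)
        = (M0.map π).charpoly
          - X ^ Fintype.card (Module.Free.ChooseBasisIndex R q) := by
      rw [Polynomial.map_sub, Polynomial.map_pow, Polynomial.map_X, hcard0,
        ← LinearMap.charpoly_toMatrix g0 b0, ← Matrix.charpoly_map]
    have hnn : IsNilpotent (Polynomial.map π (g0.charpoly - X ^ g0.charpoly.natDegree)) := by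
      rw [hmap]
      exact hnil0
    have hcoeff := (Polynomial.isNilpotent_iff.1 hnn) i
    rw [Polynomial.coeff_map] at hcoeff
    obtain ⟨m', hm'⟩ := hcoeff
    refine ⟨m' + 1, Nat.succ_pos _, ?_⟩
    rw [← Ideal.Quotient.eq_zero_iff_mem, ← hπdef, map_pow, pow_succ, hm', zero_mul]
  · intro i
    rw [Polynomial.C_1]
    have hnilB := Matrix.isNilpotent_charpoly_sub_pow_of_isNilpotent hM1nil
    have hB1 : (M1 - 1).map π + 1 = M1.map π := by
      rw [← RingHom.mapMatrix_apply, map_sub, map_one, sub_add_cancel, RingHom.mapMatrix_apply]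
    have hch : (M1.map π).charpoly
        = aeval (X - 1 : (R ⧸ jacobsonRadical R)[X]) (((M1 - 1).map π).charpoly) := by
      rw [← hB1, charpoly_add_one]
    have hmain : IsNilpotent (Polynomial.map π
        (g1.charpoly - (X - 1) ^ g1.charpoly.natDegree)) := by
      have h1 : Polynomial.map π g1.charpoly = (M1.map π).charpoly := by
        rw [← LinearMap.charpoly_toMatrix g1 b1, ← Matrix.charpoly_map]
      have h2 : Polynomial.map π ((X - 1 : R[X]) ^ g1.charpoly.natDegree)
          = (X - 1) ^ Fintype.card (Module.Free.ChooseBasisIndex R p) := by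
        rw [Polynomial.map_pow, Polynomial.map_sub, Polynomial.map_X, Polynomial.map_one, hcard1]
      rw [Polynomial.map_sub, h1, h2, hch]
      have hsplit : ((M1 - 1).map π).charpoly
          = X ^ Fintype.card (Module.Free.ChooseBasisIndex R p)
            + (((M1 - 1).map π).charpoly
              - X ^ Fintype.card (Module.Free.ChooseBasisIndex R p)) := by
        ring
      rw [hsplit, map_add, map_pow, Polynomial.aeval_X, add_sub_cancel_left]
      exact IsNilpotent.map hnilB (aeval (X - 1 : (R ⧸ jacobsonRadical R)[X]))
    have hcoeff := (Polynomial.isNilpotent_iff.1 hmain) i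
    rw [Polynomial.coeff_map] at hcoeff
    obtain ⟨m', hm'⟩ := hcoeff
    refine ⟨m' + 1, Nat.succ_pos _, ?_⟩
    rw [← Ideal.Quotient.eq_zero_iff_mem, ← hπdef, map_pow, pow_succ, hm', zero_mul]

end TwoToThree

section Assemble

lemma subsingleton_jsharp {S : Type*} [Ring S] [Subsingleton S] (x : S) : x ∈ Jsharp S :=
  ⟨1, one_pos, by rw [pow_one, Subsingleton.elim x 0]; exact Submodule.zero_mem _⟩

lemma subsingleton_clean {S : Type*} [Ring S] [Subsingleton S] (a : S) :
    IsStronglyJsharpClean a :=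
  ⟨0, by simp [IsIdempotentElem], by simpa using subsingleton_jsharp (a - 0),
    Subsingleton.elim _ _⟩

end Assemble


/-- for a monic `h` of degree `n` over a projective-free ring, TFAE:
every matrix with characteristic polynomial `h` is strongly `J^#`-clean; the companion
matrix of `h` is strongly `J^#`-clean; `h = h₀h₁` with `h₀ ∈ 𝕁₀`, `h₁ ∈ 𝕁₁`. -/
theorem stronglyJsharpClean_charpoly_tfae {R : Type u} [CommRing R]
    (hR : IsProjectiveFree R) {n : ℕ} (h : R[X]) (hmonic : h.Monic)
    (hdeg : h.natDegree = n) :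
    ((∀ φ : Matrix (Fin n) (Fin n) R, φ.charpoly = h → IsStronglyJsharpClean φ) ↔
      IsStronglyJsharpClean (companionMatrix n h)) ∧
    (IsStronglyJsharpClean (companionMatrix n h) ↔
      ∃ h₀ h₁ : R[X], h = h₀ * h₁ ∧ h₀ ∈ Jpoly (0 : R) ∧ h₁ ∈ Jpoly (1 : R)) := by
  rcases subsingleton_or_nontrivial R with hsub | hnont
  · refine ⟨⟨fun _ => subsingleton_clean _, fun _ φ _ => subsingleton_clean φ⟩,
      ⟨fun _ => ?_, fun _ => subsingleton_clean _⟩⟩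
    exact ⟨1, 1, Polynomial.ext fun i => Subsingleton.elim _ _,
      ⟨Polynomial.monic_one, fun i => subsingleton_jsharp _⟩,
      ⟨Polynomial.monic_one, fun i => subsingleton_jsharp _⟩⟩
  · have hcc := charpoly_companion h hmonic hdeg
    have h23 : IsStronglyJsharpClean (companionMatrix n h) →
        ∃ h₀ h₁ : R[X], h = h₀ * h₁ ∧ h₀ ∈ Jpoly (0 : R) ∧ h₁ ∈ Jpoly (1 : R) := by
      intro hc
      obtain ⟨h₀, h₁, heq, m0, m1⟩ := two_to_three hR hc
      rw [hcc] at heq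
      exact ⟨h₀, h₁, heq, m0, m1⟩
    constructor
    · constructor
      · intro H
        exact H _ hcc
      · intro hc φ hφ
        obtain ⟨h₀, h₁, heq, m0, m1⟩ := h23 hc
        exact three_to_one heq m0 m1 φ hφ
    · constructor
      · exact h23
      · rintro ⟨h₀, h₁, heq, m0, m1⟩
        exact three_to_one heq m0 m1 _ hcc
end

section
/- Let R be a projective-free ring and let f(t) = t² + at + b ∈ R[t] with 1 + a ∈ J(R) and b ∉ J(R). Then the following are equivalent: (1) every 2 × 2 matrix φ over R with characteristic polynomial χ(φ) = f(t) is strongly J^#-clean; (2) there exist r₁ ∈ J(R) and r₂ ∈ 1 + J(R) such that f(r₁) = 0 and f(r₂) = 0; (3) there exists r ∈ J(R) such that f(r) = 0. -/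
open Polynomial

universe u

section Helpers
variable {R : Type u} [CommRing R]

lemma mem_jac_of_pow {x : R} {n : ℕ} (hn : 0 < n) (h : x ^ n ∈ jacobsonRadical R) :
    x ∈ jacobsonRadical R := by
  rw [jacobsonRadical, Ideal.jacobson, Ideal.mem_sInf] at h ⊢
  intro J hJ
  exact (hJ.2.isPrime).mem_of_pow_mem n (h hJ)

lemma isUnit_one_add {j : R} (hj : j ∈ jacobsonRadical R) : IsUnit (1 + j) := by
  simpa [add_comm] using Ideal.mem_jacobson_bot.mp hj 1

/-- column ideal -/
def colIdeal (m : Ideal R) (j : Fin 2) : Ideal (Matrix (Fin 2) (Fin 2) R) where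
  carrier := {A | ∀ i, A i j ∈ m}
  add_mem' := fun hA hB i => m.add_mem (hA i) (hB i)
  zero_mem' := fun i => m.zero_mem
  smul_mem' := fun B A hA i => by
    show (B * A) i j ∈ m
    rw [Matrix.mul_apply]
    exact Ideal.sum_mem m fun k _ => m.mul_mem_left _ (hA k)

lemma mem_colIdeal {m : Ideal R} {j : Fin 2} {A : Matrix (Fin 2) (Fin 2) R} :
    A ∈ colIdeal m j ↔ ∀ i, A i j ∈ m := Iff.rfl

lemma colIdeal_isMaximal {m : Ideal R} (hm : m.IsMaximal) (j : Fin 2) :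
    (colIdeal m j).IsMaximal := by
  rw [Ideal.isMaximal_def]
  constructor
  · intro h
    have h1 : (1 : Matrix (Fin 2) (Fin 2) R) ∈ colIdeal m j := h ▸ Submodule.mem_top
    have := h1 j
    rw [Matrix.one_apply_eq] at this
    exact hm.ne_top ((Ideal.eq_top_iff_one m).mpr this)
  · intro I hI
    obtain ⟨A, hAI, hA⟩ := SetLike.exists_of_lt hI
    rw [mem_colIdeal] at hA
    push_neg at hA
    obtain ⟨i, hi⟩ := hA
    obtain ⟨y, c, hc, hyc⟩ := hm.exists_inv hi
    have h1 : (1 : Matrix (Fin 2) (Fin 2) R) =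
        Matrix.single j i y * A + (1 - Matrix.single j i y * A) := by abel
    rw [Ideal.eq_top_iff_one]
    rw [h1]
    have hBA : Matrix.single j i y * A ∈ I := by
      simpa [smul_eq_mul] using I.smul_mem (Matrix.single j i y) hAI
    refine I.add_mem hBA (hI.le ?_)
    rw [mem_colIdeal]
    intro k
    rcases eq_or_ne k j with rfl | hkj
    · rw [Matrix.sub_apply, Matrix.one_apply_eq,
        Matrix.single_mul_apply_same]
      have : (1 : R) - y * A i k = c := by linear_combination -hyc
      rw [this]; exact hc
    · rw [Matrix.sub_apply, Matrix.one_apply_ne hkj,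
        Matrix.single_mul_apply_of_ne _ _ _ _ _ hkj]
      simpa using m.zero_mem

lemma matrix_mem_jac_iff {M : Matrix (Fin 2) (Fin 2) R} :
    M ∈ jacobsonRadical (Matrix (Fin 2) (Fin 2) R) ↔
      ∀ i j, M i j ∈ jacobsonRadical R := by
  constructor
  · intro h i j
    rw [jacobsonRadical, Ideal.jacobson, Ideal.mem_sInf]
    rintro m ⟨-, hm⟩
    have := Ideal.mem_sInf.mp h (I := colIdeal m j) ⟨bot_le, colIdeal_isMaximal hm j⟩
    exact this i
  · intro h
    rw [jacobsonRadical, Ideal.jacobson, Ideal.mem_sInf]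
    rintro 𝔪 ⟨-, h𝔪⟩
    by_contra hM
    have hlt : 𝔪 < 𝔪 ⊔ Ideal.span {M} := by
      refine lt_of_le_of_ne le_sup_left fun e => hM ?_
      rw [e]
      exact Submodule.mem_sup_right (Submodule.mem_span_singleton_self M)
    have htop := h𝔪.out.2 _ hlt
    have h1 : (1 : Matrix (Fin 2) (Fin 2) R) ∈ 𝔪 ⊔ Ideal.span {M} := htop ▸ Submodule.mem_top
    obtain ⟨y, hy, z, hz, hyz⟩ := Submodule.mem_sup.mp h1
    obtain ⟨B, hB⟩ := Submodule.mem_span_singleton.mp hz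
    have hzent : ∀ i j, z i j ∈ jacobsonRadical R := by
      intro i j
      rw [← hB, smul_eq_mul, Matrix.mul_apply]
      exact Ideal.sum_mem _ fun k _ => (jacobsonRadical R).mul_mem_left _ (h k j)
    have hdet : IsUnit y.det := by
      have hy' : y = 1 - z := eq_sub_of_add_eq hyz
      rw [hy', Matrix.det_fin_two]
      have : (1 - z) 0 0 * (1 - z) 1 1 - (1 - z) 0 1 * (1 - z) 1 0 =
          1 + (-(z 0 0) - z 1 1 + z 0 0 * z 1 1 - z 0 1 * z 1 0) := by
        simp [Matrix.sub_apply, Matrix.one_apply]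
        ring
      rw [this]
      refine isUnit_one_add ?_
      exact Ideal.sub_mem _ (Ideal.add_mem _ (Ideal.sub_mem _ (neg_mem (hzent 0 0))
        (hzent 1 1)) (Ideal.mul_mem_left _ _ (hzent 1 1)))
        (Ideal.mul_mem_left _ _ (hzent 1 0))
    exact h𝔪.ne_top (Ideal.eq_top_of_isUnit_mem _ hy ((Matrix.isUnit_iff_isUnit_det y).mpr hdet))


lemma key_trip (e M : Matrix (Fin 2) (Fin 2) R) (hdet : e.det = 0) :
    e * M * e = (e * M).trace • e := by
  rw [Matrix.det_fin_two] at hdet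
  ext i j
  rw [Matrix.smul_apply, Matrix.trace_fin_two, smul_eq_mul]
  fin_cases i <;> fin_cases j <;>
    simp only [Matrix.mul_apply, Fin.sum_univ_two, Fin.isValue, Fin.mk_zero, Fin.mk_one] <;>
    first
      | linear_combination (M 0 0) * hdet
      | linear_combination (-(M 0 0)) * hdet
      | linear_combination (M 0 1) * hdet
      | linear_combination (-(M 0 1)) * hdet
      | linear_combination (M 1 0) * hdet
      | linear_combination (-(M 1 0)) * hdet
      | linear_combination (M 1 1) * hdet
      | linear_combination (-(M 1 1)) * hdet

lemma det_comb (e : Matrix (Fin 2) (Fin 2) R) (x y : R) (htr : e.trace = 1)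
    (hdet : e.det = 0) : (x • e + y • (1 - e)).det = x * y := by
  rw [Matrix.trace_fin_two] at htr
  rw [Matrix.det_fin_two] at hdet
  rw [Matrix.det_fin_two]
  simp only [Matrix.add_apply, Matrix.smul_apply, Matrix.sub_apply, Matrix.one_apply,
    smul_eq_mul, if_pos rfl, Fin.isValue]
  norm_num
  linear_combination (x - y)^2 * hdet + (y*(x-y)) * htr

lemma idem_scalar (e : Matrix (Fin 2) (Fin 2) R) (he : e * e = e) (hdet : e.det = 0) :
    e = e.trace • e := by
  conv_lhs => rw [← he]
  rw [Matrix.det_fin_two] at hdet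
  ext i j
  rw [Matrix.smul_apply, Matrix.trace_fin_two, smul_eq_mul]
  fin_cases i <;> fin_cases j <;>
    simp only [Matrix.mul_apply, Fin.sum_univ_two, Fin.isValue, Fin.mk_zero, Fin.mk_one] <;>
    first
      | linear_combination (0:R) * hdet
      | linear_combination hdet
      | linear_combination -hdet

lemma idem_zero_or_one (hR : IsProjectiveFree R) {d : R} (hd : d * d = d) :
    d = 0 ∨ d = 1 := by
  set I := Ideal.span {d} with hI
  have hmem : d ∈ I := Ideal.subset_span rfl
  have hfin : Module.Finite R I := Module.Finite.iff_fg.mpr ⟨{d}, by simp [hI]⟩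
  have hproj : Module.Projective R I := by
    refine Module.Projective.of_split (M := R) I.subtype
      (LinearMap.toSpanSingleton R I ⟨d, hmem⟩) ?_
    ext ⟨x, hx⟩
    obtain ⟨c, hc⟩ := Ideal.mem_span_singleton'.mp hx
    show x • d = x
    rw [smul_eq_mul, ← hc]
    linear_combination c * hd
  have hfree : Module.Free R I := hR I hfin hproj
  obtain b := Module.Free.chooseBasis R I
  by_cases hne : Nonempty (Module.Free.ChooseBasisIndex R I)
  · right
    obtain ⟨i⟩ := hne
    have hsmul : (1 - d) • (b i) = 0 := by
      obtain ⟨c, hc⟩ := Ideal.mem_span_singleton'.mp (b i).2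
      refine Subtype.ext ?_
      show (1 - d) • ((b i : I) : R) = 0
      rw [smul_eq_mul, ← hc]
      linear_combination (-c) * hd
    have h1 := congrArg b.repr hsmul
    rw [map_smul, map_zero, b.repr_self] at h1
    have h2 := congrArg (fun g => g i) h1
    simp only [Finsupp.smul_apply, Finsupp.single_eq_same, Finsupp.coe_zero,
      Pi.zero_apply, smul_eq_mul, mul_one] at h2
    exact (sub_eq_zero.mp h2).symm
  · left
    have : Subsingleton (Module.Free.ChooseBasisIndex R I →₀ R) := by
      rw [not_nonempty_iff] at hne
      infer_instance
    have h0 : (⟨d, hmem⟩ : I) = 0 := b.repr.injective (Subsingleton.elim _ _)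
    simpa using congrArg Subtype.val h0

lemma charpoly_fin_two' (M : Matrix (Fin 2) (Fin 2) R) :
    M.charpoly = X ^ 2 - C M.trace * X + C M.det := by
  rw [Matrix.charpoly, Matrix.det_fin_two, Matrix.trace_fin_two, Matrix.det_fin_two,
    Matrix.charmatrix_apply_eq, Matrix.charmatrix_apply_eq,
    Matrix.charmatrix_apply_ne _ _ _ (by decide), Matrix.charmatrix_apply_ne _ _ _ (by decide)]
  simp only [map_add, map_mul, map_sub]
  ring

end Helpers

/-- for `f = t² + at + b` with `1 + a ∈ J(R)`, `b ∉ J(R)` over a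
projective-free ring, TFAE: every `2 × 2` matrix with characteristic polynomial `f`
is strongly `J^#`-clean; `f` has roots `r₁ ∈ J(R)` and `r₂ ∈ 1 + J(R)`; `f` has a
root in `J(R)`. -/
theorem stronglyJsharpClean_quadratic_tfae {R : Type u} [CommRing R]
    (hR : IsProjectiveFree R) (a b : R) (f : R[X]) (hf : f = X ^ 2 + C a * X + C b)
    (ha : 1 + a ∈ jacobsonRadical R) (hb : b ∉ jacobsonRadical R) :
    ((∀ φ : Matrix (Fin 2) (Fin 2) R, φ.charpoly = f → IsStronglyJsharpClean φ) ↔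
      (∃ r₁ r₂ : R, r₁ ∈ jacobsonRadical R ∧ r₂ - 1 ∈ jacobsonRadical R ∧
        f.eval r₁ = 0 ∧ f.eval r₂ = 0)) ∧
    ((∃ r₁ r₂ : R, r₁ ∈ jacobsonRadical R ∧ r₂ - 1 ∈ jacobsonRadical R ∧
        f.eval r₁ = 0 ∧ f.eval r₂ = 0) ↔
      ∃ r ∈ jacobsonRadical R, f.eval r = 0) := by
  subst hf
  have hdetJ : ∀ (ψ : Matrix (Fin 2) (Fin 2) R),
      (∀ i j, ψ i j ∈ jacobsonRadical R) → ψ.det ∈ jacobsonRadical R := by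
    intro ψ hψ
    rw [Matrix.det_fin_two]
    exact Ideal.sub_mem _ (Ideal.mul_mem_left _ _ (hψ 1 1)) (Ideal.mul_mem_left _ _ (hψ 1 0))
  constructor
  · constructor
    · -- (1) → (2)
      intro h1
      set φ : Matrix (Fin 2) (Fin 2) R := !![0, -b; 1, -a] with hφdef
      have htr : φ.trace = -a := by
        simp [hφdef, Matrix.trace_fin_two]
      have hdetφ : φ.det = b := by
        rw [Matrix.det_fin_two]
        simp [hφdef]
      have hcp : φ.charpoly = X ^ 2 + C a * X + C b := by
        rw [charpoly_fin_two', htr, hdetφ, map_neg]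
        ring
      obtain ⟨e, he, ⟨n, hn, hN⟩, hcomm⟩ := h1 φ hcp
      rw [matrix_mem_jac_iff] at hN
      have he' : e * e = e := he
      have hdet_idem : e.det * e.det = e.det := by rw [← Matrix.det_mul, he']
      rcases idem_zero_or_one hR hdet_idem with hd0 | hd1
      · -- det e = 0
        have hesc := idem_scalar e he' hd0
        have ht_idem : e.trace * e.trace = e.trace := by
          have h2 := congrArg Matrix.trace hesc
          rw [Matrix.trace_smul, smul_eq_mul] at h2
          exact h2.symm
        rcases idem_zero_or_one hR ht_idem with ht0 | ht1
        · -- trace e = 0 : e = 0, contradiction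
          rw [ht0, zero_smul] at hesc
          rw [hesc, sub_zero] at hN
          have h := hdetJ _ hN
          rw [Matrix.det_pow] at h
          have h' := mem_jac_of_pow hn h
          rw [hdetφ] at h'
          exact absurd h' hb
        · -- trace e = 1 : main case
          set α := (φ * e).trace with hαdef
          have hphie : φ * e = α • e := by
            have h3 := key_trip e φ hd0
            rw [hcomm, mul_assoc, he'] at h3
            exact h3
          have h1e : (1 - e) * (1 - e) = 1 - e := by
            rw [sub_mul, one_mul, mul_sub, mul_one, he']
            abel
          have htr1e : (1 - e).trace = 1 := by
            rw [Matrix.trace_sub, Matrix.trace_one, ht1]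
            norm_num
          have hdet1e : (1 - e).det = 0 := by
            rw [Matrix.det_fin_two] at hd0 ⊢
            rw [Matrix.trace_fin_two] at ht1
            simp only [Matrix.sub_apply, Matrix.one_apply, if_pos rfl, Fin.isValue]
            norm_num
            linear_combination hd0 - ht1
          have hcomm1 : (1 - e) * φ = φ * (1 - e) := by
            rw [sub_mul, mul_sub, hcomm, one_mul, mul_one]
          set β := (φ * (1 - e)).trace with hβdef
          have hphie1 : φ * (1 - e) = β • (1 - e) := by
            have h3 := key_trip (1 - e) φ hdet1e
            rw [hcomm1, mul_assoc, h1e] at h3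
            exact h3
          have hφdecomp : φ = α • e + β • (1 - e) := by
            have h4 : φ = φ * e + φ * (1 - e) := by
              rw [mul_sub, mul_one]
              abel
            rw [h4, hphie, hphie1]
          have hsum : α + β = -a := by
            have h5 := congrArg Matrix.trace hφdecomp
            rw [htr, Matrix.trace_add, Matrix.trace_smul, Matrix.trace_smul, ht1, htr1e,
              smul_eq_mul, smul_eq_mul, mul_one, mul_one] at h5
            exact h5.symm
          have hprod : α * β = b := by
            have h5 := congrArg Matrix.det hφdecomp
            rw [hdetφ, det_comb e α β ht1 hd0] at h5
            exact h5.symm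
          have h0e : (1 - e) * e = 0 := by rw [sub_mul, one_mul, he', sub_self]
          have h0e' : e * (1 - e) = 0 := by rw [mul_sub, mul_one, he', sub_self]
          have hNe : (φ - e) * e = (α - 1) • e := by
            have h6 : φ - e = (α - 1) • e + β • (1 - e) := by
              rw [hφdecomp, sub_smul, one_smul]
              abel
            rw [h6, add_mul, Matrix.smul_mul, Matrix.smul_mul, he', h0e, smul_zero, add_zero]
          have hNe1 : (φ - e) * (1 - e) = β • (1 - e) := by
            have h6 : φ - e = (α - 1) • e + β • (1 - e) := by
              rw [hφdecomp, sub_smul, one_smul]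
              abel
            rw [h6, add_mul, Matrix.smul_mul, Matrix.smul_mul, h1e, h0e', smul_zero, zero_add]
          have hpow : ∀ m : ℕ, (φ - e) ^ m * e = (α - 1) ^ m • e := by
            intro m
            induction m with
            | zero => simp
            | succ k ih =>
              rw [pow_succ, mul_assoc, hNe, Matrix.mul_smul, ih, smul_smul]
              congr 1
              ring
          have hpow1 : ∀ m : ℕ, (φ - e) ^ m * (1 - e) = β ^ m • (1 - e) := by
            intro m
            induction m with
            | zero => simp
            | succ k ih =>
              rw [pow_succ, mul_assoc, hNe1, Matrix.mul_smul, ih, smul_smul]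
              congr 1
              ring
          have hent : ∀ (ψ : Matrix (Fin 2) (Fin 2) R) i j,
              ((φ - e) ^ n * ψ) i j ∈ jacobsonRadical R := by
            intro ψ i j
            rw [Matrix.mul_apply]
            exact Ideal.sum_mem _ fun k _ => Ideal.mul_mem_right _ _ (hN i k)
          have hαJ : α - 1 ∈ jacobsonRadical R := by
            refine mem_jac_of_pow hn ?_
            have h7 : ((φ - e) ^ n * e).trace = (α - 1) ^ n := by
              rw [hpow n, Matrix.trace_smul, ht1, smul_eq_mul, mul_one]
            rw [← h7, Matrix.trace_fin_two]
            exact Ideal.add_mem _ (hent e 0 0) (hent e 1 1)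
          have hβJ : β ∈ jacobsonRadical R := by
            refine mem_jac_of_pow hn ?_
            have h7 : ((φ - e) ^ n * (1 - e)).trace = β ^ n := by
              rw [hpow1 n, Matrix.trace_smul, htr1e, smul_eq_mul, mul_one]
            rw [← h7, Matrix.trace_fin_two]
            exact Ideal.add_mem _ (hent (1 - e) 0 0) (hent (1 - e) 1 1)
          refine ⟨β, α, hβJ, hαJ, ?_, ?_⟩
          · simp only [eval_add, eval_mul, eval_pow, eval_X, eval_C]
            linear_combination β * hsum - hprod
          · simp only [eval_add, eval_mul, eval_pow, eval_X, eval_C]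
            linear_combination α * hsum - hprod
      · -- det e = 1 : e = 1, contradiction
        have hue : IsUnit e := (Matrix.isUnit_iff_isUnit_det e).mpr (hd1 ▸ isUnit_one)
        have he1 : e = 1 := hue.mul_left_cancel (by rw [he', mul_one])
        rw [he1] at hN
        have hdN : (φ - 1).det ∈ jacobsonRadical R := by
          have h := hdetJ _ hN
          rw [Matrix.det_pow] at h
          exact mem_jac_of_pow hn h
        have hd1ab : (φ - 1).det = 1 + a + b := by
          rw [Matrix.det_fin_two]
          simp [hφdef, Matrix.one_apply]
        rw [hd1ab] at hdN
        have hbJ : b ∈ jacobsonRadical R := by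
          have := Ideal.sub_mem _ hdN ha
          have h5 : (1 + a + b) - (1 + a) = b := by ring
          rwa [h5] at this
        exact absurd hbJ hb
    · -- (2) → (1)
      rintro ⟨r₁, r₂, hr₁, hr₂, hf1, hf2⟩ φ hφ
      have he1 : r₁ ^ 2 + a * r₁ + b = 0 := by
        simpa using hf1
      have he2 : r₂ ^ 2 + a * r₂ + b = 0 := by
        simpa using hf2
      have hvu : IsUnit (r₂ - r₁) := by
        have h6 : r₂ - r₁ = 1 + ((r₂ - 1) - r₁) := by ring
        rw [h6]
        exact isUnit_one_add (Ideal.sub_mem _ hr₂ hr₁)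
      have hw : (r₂ - r₁) * (r₁ + r₂ + a) = 0 := by linear_combination he2 - he1
      have hw0 : r₁ + r₂ + a = 0 := (hvu.mul_right_eq_zero).mp hw
      have hprod : r₁ * r₂ = b := by linear_combination r₁ * hw0 - he1
      obtain ⟨u, hu⟩ := hvu
      have hCH := Matrix.aeval_self_charpoly φ
      rw [hφ] at hCH
      have hfac : (X ^ 2 + C a * X + C b : R[X]) = (X - C r₁) * (X - C r₂) := by
        have h7 : C r₁ + C r₂ + C a = (0 : R[X]) := by
          rw [← C_add, ← C_add, hw0, C_0]
        have h8 : C r₁ * C r₂ = (C b : R[X]) := by rw [← C_mul, hprod]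
        linear_combination (X : R[X]) * h7 - h8
      rw [hfac, map_mul, map_sub, map_sub, aeval_X, aeval_C, aeval_C] at hCH
      set A := φ - (algebraMap R (Matrix (Fin 2) (Fin 2) R)) r₁ with hA
      have hA2 : A * A = (r₂ - r₁) • A := by
        have h9 : A * A = A * (φ - (algebraMap R (Matrix (Fin 2) (Fin 2) R)) r₂)
            + A * ((algebraMap R (Matrix (Fin 2) (Fin 2) R)) (r₂ - r₁)) := by
          rw [← mul_add]
          congr 1
          rw [map_sub, hA]
          abel
        rw [h9, hCH, zero_add, ← Algebra.commutes, ← Algebra.smul_def]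
      set e := (↑u⁻¹ : R) • A with hedef
      have hee : e * e = e := by
        rw [hedef, Matrix.smul_mul, Matrix.mul_smul, smul_smul, hA2, smul_smul]
        congr 1
        rw [← hu, mul_assoc, Units.inv_mul, mul_one]
      have hcommφ : e * φ = φ * e := by
        rw [hedef, Matrix.smul_mul, Matrix.mul_smul]
        congr 1
        rw [hA, sub_mul, mul_sub, Algebra.commutes]
      have hc : ((r₂ - 1) - r₁) * (↑u⁻¹ : R) = 1 - (↑u⁻¹ : R) := by
        have h10 : ((r₂ - 1) - r₁) = (↑u : R) - 1 := by rw [hu]; ring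
        rw [h10, sub_mul, one_mul, Units.mul_inv]
      have hφA : φ = A + r₁ • (1 : Matrix (Fin 2) (Fin 2) R) := by
        rw [hA, Algebra.algebraMap_eq_smul_one]
        abel
      have hdecomp : φ - e = r₁ • (1 : Matrix (Fin 2) (Fin 2) R) + ((r₂ - 1) - r₁) • e := by
        rw [hedef, smul_smul, hc, sub_smul, one_smul, hφA]
        abel
      refine ⟨e, hee, ⟨1, one_pos, ?_⟩, hcommφ⟩
      rw [pow_one, matrix_mem_jac_iff]
      intro i j
      rw [hdecomp]
      simp only [Matrix.add_apply, Matrix.smul_apply, smul_eq_mul]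
      exact Ideal.add_mem _ (Ideal.mul_mem_right _ _ hr₁)
        (Ideal.mul_mem_right _ _ (Ideal.sub_mem _ hr₂ hr₁))
  · constructor
    · rintro ⟨r₁, r₂, h1, h2, h3, h4⟩
      exact ⟨r₁, h1, h3⟩
    · rintro ⟨r, hrJ, hr⟩
      have her : r ^ 2 + a * r + b = 0 := by simpa using hr
      refine ⟨r, -a - r, hrJ, ?_, hr, ?_⟩
      · have h11 : -a - r - 1 = -((1 + a) + r) := by ring
        rw [h11]
        exact neg_mem (Ideal.add_mem _ ha hrJ)
      · simp only [eval_add, eval_mul, eval_pow, eval_X, eval_C]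
        linear_combination her
end
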